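/- arXiv:2310.19490 — 11 statements merged into one kernel-verified Lean document; each statement's English description precedes it below -/
import Mathlib

section
/- Let A be the 3-dimensional complex 3-Lie algebra with [e1,e2,e3] = e1. A linear map T with matrix (a_{ij}) (i.e., T(e_i) = Σ_j a_{ij} e_j) is an O-operator with respect to the adjoint representation if and only if the following three equations hold: (1) a12(a11 a21 − a21 a33 + a23 a31) + a13(a21 a32 + a11 a31 − a22 a31) − a11^2(a22 + a33) = 0; (2) a12(a11 a22 − a12 a21 − a31 a13 + a33 a11 + a22 a33 − a23 a32) = 0; (3) a13(a11 a22 − a12 a21 − a13 a31 + a33 a11 + a22 a33 − a23 a32) = 0. -/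
open Finset

/-- The standard basis of `ℂ³`: `e 0 = e₁`, `e 1 = e₂`, `e 2 = e₃`. -/
def e (i : Fin 3) : Fin 3 → ℂ := fun j => if j = i then 1 else 0

/-- The trilinear skew-symmetric bracket on `ℂ³` determined by `[e₁,e₂,e₃] = e₁`. -/
def br (x y z : Fin 3 → ℂ) : Fin 3 → ℂ := fun i =>
  if i = 0 then
    x 0 * (y 1 * z 2 - y 2 * z 1) - x 1 * (y 0 * z 2 - y 2 * z 0)
      + x 2 * (y 0 * z 1 - y 1 * z 0)
  else 0

/-- `T` is an `𝒪`-operator with respect to the adjoint representation. -/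
def IsOOperator (T : (Fin 3 → ℂ) →ₗ[ℂ] (Fin 3 → ℂ)) : Prop :=
  ∀ x y z : Fin 3 → ℂ, br (T x) (T y) (T z) =
    T (br (T x) (T y) z + br (T y) (T z) x + br (T z) (T x) y)

set_option maxHeartbeats 1600000 in
/-- A linear map with matrix `(aᵢⱼ)` (here `a i j = a_{(i+1)(j+1)}`) is an `𝒪`-operator
for the 3-dimensional 3-Lie algebra `[e₁,e₂,e₃] = e₁` iff the three stated equations hold. -/
theorem o_operator_iff_three_equations (T : (Fin 3 → ℂ) →ₗ[ℂ] (Fin 3 → ℂ))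
    (a : Fin 3 → Fin 3 → ℂ) (hT : ∀ i, T (e i) = ∑ j, a i j • e j) :
    IsOOperator T ↔
      (a 0 1 * (a 0 0 * a 1 0 - a 1 0 * a 2 2 + a 1 2 * a 2 0)
          + a 0 2 * (a 1 0 * a 2 1 + a 0 0 * a 2 0 - a 1 1 * a 2 0)
          - a 0 0 ^ 2 * (a 1 1 + a 2 2) = 0 ∧
        a 0 1 * (a 0 0 * a 1 1 - a 0 1 * a 1 0 - a 2 0 * a 0 2 + a 2 2 * a 0 0
          + a 1 1 * a 2 2 - a 1 2 * a 2 1) = 0 ∧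
        a 0 2 * (a 0 0 * a 1 1 - a 0 1 * a 1 0 - a 0 2 * a 2 0 + a 2 2 * a 0 0
          + a 1 1 * a 2 2 - a 1 2 * a 2 1) = 0) := by
  have hA : ∀ i k, T (e i) k = a i k := by
    intro i k
    rw [hT]
    simp only [Fin.sum_univ_three, Pi.add_apply, Pi.smul_apply, smul_eq_mul, e]
    fin_cases k <;> simp
  have hTx : ∀ (x : Fin 3 → ℂ) (k : Fin 3),
      T x k = x 0 * a 0 k + x 1 * a 1 k + x 2 * a 2 k := by
    intro x k
    have hx : x = x 0 • e 0 + x 1 • e 1 + x 2 • e 2 := by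
      funext j; fin_cases j <;> simp [e]
    calc T x k = T (x 0 • e 0 + x 1 • e 1 + x 2 • e 2) k := by rw [← hx]
      _ = x 0 * T (e 0) k + x 1 * T (e 1) k + x 2 * T (e 2) k := by
          simp [map_add, map_smul]
      _ = x 0 * a 0 k + x 1 * a 1 k + x 2 * a 2 k := by rw [hA, hA, hA]
  constructor
  · intro h
    have h0 := congrFun (h (e 0) (e 1) (e 2)) 0
    have h1 := congrFun (h (e 0) (e 1) (e 2)) 1
    have h2 := congrFun (h (e 0) (e 1) (e 2)) 2
    simp [br, hTx, hA, Pi.add_apply, e, -mul_eq_zero, -zero_eq_mul] at h0 h1 h2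
    refine ⟨by linear_combination h0, by linear_combination -h1, by linear_combination -h2⟩
  · rintro ⟨h1, h2, h3⟩ x y z
    funext k
    fin_cases k
    · simp only [Fin.zero_eta, Fin.mk_one, Fin.reduceFinMk, br, hTx, Pi.add_apply, Fin.reduceEq, reduceIte]
      ring_nf
      linear_combination (x 0 * (y 1 * z 2 - y 2 * z 1) - x 1 * (y 0 * z 2 - y 2 * z 0)
        + x 2 * (y 0 * z 1 - y 1 * z 0)) * h1
    · simp only [Fin.zero_eta, Fin.mk_one, Fin.reduceFinMk, br, hTx, Pi.add_apply, Fin.reduceEq, reduceIte]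
      ring_nf
      linear_combination (-(x 0 * (y 1 * z 2 - y 2 * z 1) - x 1 * (y 0 * z 2 - y 2 * z 0)
        + x 2 * (y 0 * z 1 - y 1 * z 0))) * h2
    · simp only [Fin.zero_eta, Fin.mk_one, Fin.reduceFinMk, br, hTx, Pi.add_apply, Fin.reduceEq, reduceIte]
      ring_nf
      linear_combination (-(x 0 * (y 1 * z 2 - y 2 * z 1) - x 1 * (y 0 * z 2 - y 2 * z 0)
        + x 2 * (y 0 * z 1 - y 1 * z 0))) * h3
end

section
/- Let A be the 3-dimensional complex 3-Lie algebra with [e1,e2,e3] = e1, and let T be the linear map whose matrix is O_1, i.e., T(e1) = 0, T(e2) = a21 e1 + a22 e2 + a23 e3, T(e3) = a31 e1 + a32 e2 + a33 e3, for arbitrary complex parameters a21,...,a33. Then T is an O-operator with respect to the adjoint representation. -/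
open Finset

/-- The linear map with matrix `O₁` is an `𝒪`-operator. -/
theorem O1_is_O_operator (T : (Fin 3 → ℂ) →ₗ[ℂ] (Fin 3 → ℂ))
    (a21 a22 a23 a31 a32 a33 : ℂ)
    (h1 : T (e 0) = 0)
    (h2 : T (e 1) = a21 • e 0 + a22 • e 1 + a23 • e 2)
    (h3 : T (e 2) = a31 • e 0 + a32 • e 1 + a33 • e 2) :
    IsOOperator T := by
  have key : ∀ v : Fin 3 → ℂ, T v =
      (v 1 * a21 + v 2 * a31) • e 0 + (v 1 * a22 + v 2 * a32) • e 1
        + (v 1 * a23 + v 2 * a33) • e 2 := by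
    intro v
    have hv : v = v 0 • e 0 + v 1 • e 1 + v 2 • e 2 := by
      funext j; fin_cases j <;> simp [e]
    conv_lhs => rw [hv]
    simp only [map_add, map_smul, h1, h2, h3, smul_add, smul_smul, smul_zero]
    funext j
    fin_cases j <;> simp [e] <;> ring
  intro x y z
  rw [key x, key y, key z, key (br _ _ z + br _ _ x + br _ _ y)]
  funext j
  fin_cases j <;> simp [br, e] <;> ring
end

section
/- Let A be the 3-dimensional complex 3-Lie algebra with [e1,e2,e3] = e1, and let T be the linear map whose matrix is O_2: T(e1) = a11 e1, T(e2) = a21 e1 − a33 e2 + a23 e3, T(e3) = a31 e1 + a32 e2 + a33 e3, for arbitrary complex parameters a11, a21, a23, a31, a32, a33. Then T is an O-operator with respect to the adjoint representation. -/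
open Finset

/-- The linear map with matrix `O₂` is an `𝒪`-operator. -/
theorem O2_is_O_operator (T : (Fin 3 → ℂ) →ₗ[ℂ] (Fin 3 → ℂ))
    (a11 a21 a23 a31 a32 a33 : ℂ)
    (h1 : T (e 0) = a11 • e 0)
    (h2 : T (e 1) = a21 • e 0 + (-a33) • e 1 + a23 • e 2)
    (h3 : T (e 2) = a31 • e 0 + a32 • e 1 + a33 • e 2) :
    IsOOperator T := by
  have hrep : ∀ v : Fin 3 → ℂ, v = v 0 • e 0 + v 1 • e 1 + v 2 • e 2 := by
    intro v; funext i; fin_cases i <;> simp [e]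
  have hT0 : ∀ v : Fin 3 → ℂ, T v 0 = v 0 * a11 + v 1 * a21 + v 2 * a31 := by
    intro v
    conv_lhs => rw [hrep v]
    simp [h1, h2, h3, e]
  have hT1 : ∀ v : Fin 3 → ℂ, T v 1 = v 1 * (-a33) + v 2 * a32 := by
    intro v
    conv_lhs => rw [hrep v]
    simp [h1, h2, h3, e]
  have hT2 : ∀ v : Fin 3 → ℂ, T v 2 = v 1 * a23 + v 2 * a33 := by
    intro v
    conv_lhs => rw [hrep v]
    simp [h1, h2, h3, e]
  intro x y z
  have hsum : br (T x) (T y) z + br (T y) (T z) x + br (T z) (T x) y =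
      (br (T x) (T y) z 0 + br (T y) (T z) x 0 + br (T z) (T x) y 0) • e 0 := by
    funext i; fin_cases i <;> simp [br, e]
  rw [hsum, map_smul, h1]
  funext i; fin_cases i
  · show br (T x) (T y) (T z) 0 = _
    simp [br, e, hT0, hT1, hT2]
    ring
  · simp [br, e]
  · simp [br, e]
end

section
/- Let A be the 3-dimensional complex 3-Lie algebra with [e1,e2,e3] = e1, and let T be the linear map with matrix O_4: T(e1) = a13 e3, T(e2) = a23 e3, T(e3) = −(a23/a13) e1 + e2 + a33 e3, where a13 ≠ 0. Then T is an O-operator with respect to the adjoint representation. -/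
open Finset

lemma basis_expand (v : Fin 3 → ℂ) : v = v 0 • e 0 + v 1 • e 1 + v 2 • e 2 := by
  funext j
  fin_cases j <;> simp [e]

/-- The linear map with matrix `O₄` (with `a₁₃ ≠ 0`) is an `𝒪`-operator. -/
theorem O4_is_O_operator (T : (Fin 3 → ℂ) →ₗ[ℂ] (Fin 3 → ℂ))
    (a13 a23 a33 : ℂ) (ha : a13 ≠ 0)
    (h1 : T (e 0) = a13 • e 2)
    (h2 : T (e 1) = a23 • e 2)
    (h3 : T (e 2) = (-(a23 / a13)) • e 0 + e 1 + a33 • e 2) :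
    IsOOperator T := by
  have key : ∀ v : Fin 3 → ℂ, T v =
      (-(a23 / a13) * v 2) • e 0 + (v 2) • e 1
        + (a13 * v 0 + a23 * v 1 + a33 * v 2) • e 2 := by
    intro v
    conv_lhs => rw [basis_expand v]
    rw [map_add, map_add, map_smul, map_smul, map_smul, h1, h2, h3]
    funext j
    fin_cases j <;> simp [e] <;> ring
  intro x y z
  rw [key (br (T x) (T y) z + br (T y) (T z) x + br (T z) (T x) y),
    key x, key y, key z]
  funext j
  fin_cases j <;> simp [br, e] <;> field_simp
  · ring
  · right; ring
end

section
/- Let A be the 3-dimensional complex 3-Lie algebra with [e1,e2,e3] = e1, and let T have matrix O_30: T(e1) = e1 + e2 + e3, T(e2) = e1 + (√3 − 1) e3, T(e3) = e1 − (1 + √3) e2. Then T is an O-operator with respect to the adjoint representation. -/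
open Finset

/-- The linear map with matrix `O₃₀` is an `𝒪`-operator, where `s` is a fixed
square root of `3` in `ℂ`. -/
theorem O30_is_O_operator (T : (Fin 3 → ℂ) →ₗ[ℂ] (Fin 3 → ℂ))
    (s : ℂ) (hs : s ^ 2 = 3)
    (h1 : T (e 0) = e 0 + e 1 + e 2)
    (h2 : T (e 1) = e 0 + (s - 1) • e 2)
    (h3 : T (e 2) = e 0 - (1 + s) • e 1) :
    IsOOperator T := by
  have hrep : ∀ v : Fin 3 → ℂ, v = v 0 • e 0 + v 1 • e 1 + v 2 • e 2 := by
    intro v; funext j; fin_cases j <;> simp [e]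
  have hT : ∀ v : Fin 3 → ℂ, T v = fun j =>
      if j = 0 then v 0 + v 1 + v 2
      else if j = 1 then v 0 - (1 + s) * v 2 else v 0 + (s - 1) * v 1 := by
    intro v
    conv_lhs => rw [hrep v]
    rw [map_add, map_add, map_smul, map_smul, map_smul, h1, h2, h3]
    funext j; fin_cases j <;> simp [e] <;> ring
  intro x y z
  funext i
  simp only [hT, br, Pi.add_apply]
  fin_cases i
  · simp; ring
  · simp; linear_combination (x 0 * y 2 * z 1 - x 0 * y 1 * z 2 - x 1 * y 2 * z 0
      + x 1 * y 0 * z 2 + x 2 * y 1 * z 0 - x 2 * y 0 * z 1) * hs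
  · simp; linear_combination (x 0 * y 2 * z 1 - x 0 * y 1 * z 2 - x 1 * y 2 * z 0
      + x 1 * y 0 * z 2 + x 2 * y 1 * z 0 - x 2 * y 0 * z 1) * hs
end

section
/- Let A be the 3-dimensional complex 3-Lie algebra with [e1,e2,e3] = e1. If T with matrix (a_{ij}) is an O-operator with respect to the adjoint representation and a12 = a13 = 0 and a11 ≠ 0, then a22 + a33 = 0. -/
open Finset

lemma br_eq_smul (x y z : Fin 3 → ℂ) : br x y z = (br x y z 0) • e 0 := by
  funext i
  fin_cases i <;> simp [br, e]

/-- If `T` is an `𝒪`-operator with `a₁₂ = a₁₃ = 0` and `a₁₁ ≠ 0`, then `a₂₂ + a₃₃ = 0`. -/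
theorem case_a12_a13_zero (T : (Fin 3 → ℂ) →ₗ[ℂ] (Fin 3 → ℂ))
    (a : Fin 3 → Fin 3 → ℂ) (hT : ∀ i, T (e i) = ∑ j, a i j • e j)
    (hO : IsOOperator T)
    (h12 : a 0 1 = 0) (h13 : a 0 2 = 0) (h11 : a 0 0 ≠ 0) :
    a 1 1 + a 2 2 = 0 := by
  have hcoord : ∀ i j, T (e i) j = a i j := by
    intro i j
    rw [hT]
    simp only [Fin.sum_univ_three]
    fin_cases j <;> simp [e]
  have h0 := hO (e 0) (e 1) (e 2)
  rw [br_eq_smul (T (e 0)) (T (e 1)) (e 2), br_eq_smul (T (e 1)) (T (e 2)) (e 0),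
    br_eq_smul (T (e 2)) (T (e 0)) (e 1)] at h0
  have h0' := congrFun h0 0
  simp only [← smul_add, map_smul, map_add, Pi.smul_apply, Pi.add_apply, smul_eq_mul] at h0'
  simp [br, e, hcoord, Fin.ext_iff, h12, h13] at h0'
  have key : a 0 0 * a 0 0 * (a 1 1 + a 2 2) = 0 := by linear_combination -h0'
  rcases mul_eq_zero.mp key with h | h
  · exact absurd (mul_eq_zero.mp h) (by simp [h11])
  · exact h
end

section
/- Let A be the 3-dimensional complex 3-Lie algebra with [e1,e2,e3] = e1. If T with matrix (a_{ij}) is an O-operator with respect to the adjoint representation and a12 ≠ 0 or a13 ≠ 0, then a11(a22 + a33) − a12 a21 − a13 a31 + a22 a33 − a23 a32 = 0. -/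
open Finset

/-- If `T` is an `𝒪`-operator and `a₁₂ ≠ 0` or `a₁₃ ≠ 0`, then
`a₁₁(a₂₂+a₃₃) − a₁₂a₂₁ − a₁₃a₃₁ + a₂₂a₃₃ − a₂₃a₃₂ = 0`. -/
theorem case_a12_or_a13_nonzero (T : (Fin 3 → ℂ) →ₗ[ℂ] (Fin 3 → ℂ))
    (a : Fin 3 → Fin 3 → ℂ) (hT : ∀ i, T (e i) = ∑ j, a i j • e j)
    (hO : IsOOperator T)
    (h : a 0 1 ≠ 0 ∨ a 0 2 ≠ 0) :
    a 0 0 * (a 1 1 + a 2 2) - a 0 1 * a 1 0 - a 0 2 * a 2 0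
      + a 1 1 * a 2 2 - a 1 2 * a 2 1 = 0 := by
  have hTc : ∀ i k, T (e i) k = a i k := by
    intro i k
    rw [hT]
    simp only [Fin.sum_univ_three, Pi.add_apply, Pi.smul_apply, e, smul_eq_mul]
    fin_cases k <;> simp
  set S : ℂ := a 0 0 * (a 1 1 + a 2 2) - a 0 1 * a 1 0 - a 0 2 * a 2 0
      + a 1 1 * a 2 2 - a 1 2 * a 2 1 with hS
  have harg : br (T (e 0)) (T (e 1)) (e 2) + br (T (e 1)) (T (e 2)) (e 0)
      + br (T (e 2)) (T (e 0)) (e 1) = S • e 0 := by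
    funext k
    simp only [Pi.add_apply, Pi.smul_apply, br, e, hTc, smul_eq_mul, hS]
    fin_cases k <;> simp <;> ring
  have H := hO (e 0) (e 1) (e 2)
  rw [harg, map_smul] at H
  have H1 := congrFun H 1
  have H2 := congrFun H 2
  have h1 : S * a 0 1 = 0 := by
    simpa [br, hTc, show (1 : Fin 3) ≠ 0 by decide] using H1.symm
  have h2 : S * a 0 2 = 0 := by
    simpa [br, hTc, show (2 : Fin 3) ≠ 0 by decide] using H2.symm
  rcases h with h | h
  · exact (mul_eq_zero.mp h1).resolve_right h
  · exact (mul_eq_zero.mp h2).resolve_right h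
end

section
/- Let A be a vector space with a trilinear operation {.,.,.} satisfying the 3-Pre-Lie axioms. Then the operation [x,y,z]^c := {x,y,z} + {y,z,x} + {z,x,y} defines a 3-Lie algebra structure on A, i.e., [.,.,.]^c is skew-symmetric and satisfies the Fundamental Identity. -/
set_option maxHeartbeats 4000000 in
/-- The sub-adjacent bracket of a 3-Pre-Lie algebra is a 3-Lie bracket:
it is skew-symmetric and satisfies the Fundamental Identity. -/
theorem sub_adjacent_is_three_Lie (M : Type*) [AddCommGroup M] [Module ℂ M]
    (p : M →ₗ[ℂ] M →ₗ[ℂ] M →ₗ[ℂ] M)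
    (hskew : ∀ x y z, p x y z = - p y x z)
    (hii : ∀ x1 x2 x3 x4 x5, p x1 x2 (p x3 x4 x5) =
      p (p x1 x2 x3 + p x2 x3 x1 + p x3 x1 x2) x4 x5
        + p x3 (p x1 x2 x4 + p x2 x4 x1 + p x4 x1 x2) x5
        + p x3 x4 (p x1 x2 x5))
    (hiii : ∀ x1 x2 x3 x4 x5, p (p x1 x2 x3 + p x2 x3 x1 + p x3 x1 x2) x4 x5 =
      p x1 x2 (p x3 x4 x5) + p x2 x3 (p x1 x4 x5) + p x3 x1 (p x2 x4 x5)) :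
    -- the sub-adjacent bracket
    (∀ x y z, (p x y z + p y z x + p z x y) = -(p y x z + p x z y + p z y x)) ∧
    (∀ x y z, (p x y z + p y z x + p z x y) = -(p x z y + p z y x + p y x z)) ∧
    (∀ x1 x2 x3 x4 x5,
      let brc : M → M → M → M := fun x y z => p x y z + p y z x + p z x y
      brc x1 x2 (brc x3 x4 x5) =
        brc (brc x1 x2 x3) x4 x5 + brc x3 (brc x1 x2 x4) x5 + brc x3 x4 (brc x1 x2 x5)) := by
  have k1 : ∀ a b c d e : M, p (p a b c) d e = - p (p b a c) d e := by
    intro a b c d e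
    rw [hskew a b c, map_neg]
    simp [LinearMap.neg_apply]
  have k2 : ∀ a b c d e : M, p a b (p c d e) = - p a b (p d c e) := by
    intro a b c d e
    rw [hskew c d e, map_neg]
  have k3 : ∀ a b c d e : M, p (p a b c) d e = - p d (p a b c) e :=
    fun a b c d e => hskew (p a b c) d e
  simp only [map_add, LinearMap.add_apply] at hii hiii
  refine ⟨?_, ?_, ?_⟩
  · intro x y z
    linear_combination (norm := module) hskew x y z + hskew y z x + hskew z x y
  · intro x y z
    linear_combination (norm := module) hskew x y z + hskew y z x + hskew z x y
  · intro x1 x2 x3 x4 x5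
    dsimp only
    simp only [map_add, LinearMap.add_apply]
    linear_combination (norm := module)
      - (2:ℂ) • (k1 x2 x3 x5 x4 x1) - (2:ℂ) • (k1 x2 x5 x3 x4 x1)
      - (2:ℂ) • (k1 x3 x5 x2 x4 x1) + (k2 x2 x3 x4 x5 x1)
      + (2:ℂ) • (k2 x2 x5 x3 x4 x1) + (2:ℂ) • (k2 x3 x5 x2 x4 x1)
      - (k2 x4 x2 x3 x5 x1) - (k2 x4 x3 x2 x5 x1) + (k3 x2 x4 x3 x5 x1)
      + (k3 x3 x2 x4 x5 x1) + (k3 x4 x3 x2 x5 x1) + (hii x1 x2 x3 x4 x5)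
      + (hii x1 x2 x4 x5 x3) + (hii x1 x2 x5 x3 x4) + (hii x2 x3 x4 x5 x1)
      - (2:ℂ) • (hii x2 x5 x3 x4 x1) - (hii x2 x5 x4 x3 x1)
      + (hii x3 x2 x4 x5 x1) + (hii x3 x2 x5 x4 x1) - (hii x3 x4 x2 x5 x1)
      - (hii x3 x4 x5 x2 x1) - (hii x3 x5 x2 x4 x1) - (hii x3 x5 x4 x2 x1)
      + (2:ℂ) • (hii x4 x2 x3 x5 x1) + (hii x4 x2 x5 x3 x1)
      + (hii x4 x3 x2 x5 x1) + (2:ℂ) • (hiii x2 x3 x4 x5 x1)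
      + (hiii x2 x3 x5 x4 x1) + (hiii x2 x4 x3 x5 x1) + (hiii x2 x5 x3 x4 x1)
      + (hiii x3 x4 x5 x1 x2) - (hiii x3 x4 x5 x2 x1) - (hiii x3 x5 x4 x2 x1)
end

section
/- Let (A,[.,.,.]) be a 3-Lie algebra and T : A → A an O-operator with respect to the adjoint representation. Then the operation {x,y,z} := [Tx,Ty,z] defines a 3-Pre-Lie algebra structure on A. -/
/-- In a 3-Lie algebra, the "derived" form of the fundamental identity:
`[[a,b,c],d,e] = [a,b,[c,d,e]] + [b,c,[a,d,e]] + [c,a,[b,d,e]]`. -/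
lemma three_lie_aux (M : Type*) [AddCommGroup M] [Module ℂ M]
    (f : M →ₗ[ℂ] M →ₗ[ℂ] M →ₗ[ℂ] M)
    (hskew1 : ∀ x y z, f x y z = - f y x z)
    (hskew2 : ∀ x y z, f x y z = - f x z y)
    (hFI : ∀ x1 x2 x3 x4 x5, f x1 x2 (f x3 x4 x5) =
      f (f x1 x2 x3) x4 x5 + f x3 (f x1 x2 x4) x5 + f x3 x4 (f x1 x2 x5))
    (a b c d e : M) :
    f (f a b c) d e = f a b (f c d e) + f b c (f a d e) + f c a (f b d e) := by
  have cyc : ∀ x y z : M, f x y z = f y z x := by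
    intro x y z
    rw [hskew1 x y z, hskew2 y x z, neg_neg]
  have h213 : ∀ x y z : M, f x y z = f z x y := by
    intro x y z
    rw [cyc, cyc]
  rw [cyc (f a b c) d e, hFI d e a b c, ← cyc a d e, ← cyc b d e, ← cyc c d e,
    cyc (f a d e) b c, h213 a (f b d e) c]
  abel

/-- An `𝒪`-operator `T` with respect to the adjoint representation of a 3-Lie algebra
induces a 3-Pre-Lie structure `{x,y,z} = [Tx,Ty,z]`. -/
theorem o_operator_induces_three_pre_Lie (M : Type*) [AddCommGroup M] [Module ℂ M]
    (f : M →ₗ[ℂ] M →ₗ[ℂ] M →ₗ[ℂ] M)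
    (hskew1 : ∀ x y z, f x y z = - f y x z)
    (hskew2 : ∀ x y z, f x y z = - f x z y)
    (hFI : ∀ x1 x2 x3 x4 x5, f x1 x2 (f x3 x4 x5) =
      f (f x1 x2 x3) x4 x5 + f x3 (f x1 x2 x4) x5 + f x3 x4 (f x1 x2 x5))
    (T : M →ₗ[ℂ] M)
    (hT : ∀ x y z, f (T x) (T y) (T z) =
      T (f (T x) (T y) z + f (T y) (T z) x + f (T z) (T x) y)) :
    let p : M → M → M → M := fun x y z => f (T x) (T y) z
    (∀ x y z, p x y z = - p y x z) ∧
    (∀ x1 x2 x3 x4 x5, p x1 x2 (p x3 x4 x5) =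
      p (p x1 x2 x3 + p x2 x3 x1 + p x3 x1 x2) x4 x5
        + p x3 (p x1 x2 x4 + p x2 x4 x1 + p x4 x1 x2) x5
        + p x3 x4 (p x1 x2 x5)) ∧
    (∀ x1 x2 x3 x4 x5, p (p x1 x2 x3 + p x2 x3 x1 + p x3 x1 x2) x4 x5 =
      p x1 x2 (p x3 x4 x5) + p x2 x3 (p x1 x4 x5) + p x3 x1 (p x2 x4 x5)) := by
  intro p
  refine ⟨fun x y z => hskew1 (T x) (T y) z, fun x1 x2 x3 x4 x5 => ?_,
    fun x1 x2 x3 x4 x5 => ?_⟩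
  · show f (T x1) (T x2) (f (T x3) (T x4) x5) =
      f (T (f (T x1) (T x2) x3 + f (T x2) (T x3) x1 + f (T x3) (T x1) x2)) (T x4) x5
        + f (T x3) (T (f (T x1) (T x2) x4 + f (T x2) (T x4) x1 + f (T x4) (T x1) x2)) x5
        + f (T x3) (T x4) (f (T x1) (T x2) x5)
    rw [← hT x1 x2 x3, ← hT x1 x2 x4]
    exact hFI _ _ _ _ _
  · show f (T (f (T x1) (T x2) x3 + f (T x2) (T x3) x1 + f (T x3) (T x1) x2)) (T x4) x5 =
      f (T x1) (T x2) (f (T x3) (T x4) x5) + f (T x2) (T x3) (f (T x1) (T x4) x5)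
        + f (T x3) (T x1) (f (T x2) (T x4) x5)
    rw [← hT x1 x2 x3]
    exact three_lie_aux M f hskew1 hskew2 hFI (T x1) (T x2) (T x3) (T x4) x5
end

section
/- Every 2-dimensional 3-Pre-Lie algebra structure on a 2-dimensional vector space is automatically a 3-Pre-Lie algebra: any trilinear operation {.,.,.} on a 2-dimensional space satisfying only the skew-symmetry {x,y,z} = −{y,x,z} automatically satisfies the two remaining 3-Pre-Lie axioms. Equivalently, in dimension 2, the 3-Pre-Lie identities (ii) and (iii) impose no constraint beyond trilinearity and skew-symmetry in the first two arguments. -/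
/-- On a 2-dimensional complex vector space, any trilinear operation that is skew-symmetric
in its first two arguments automatically satisfies the remaining two 3-Pre-Lie axioms. -/
theorem two_dim_three_pre_Lie_trivial
    (p : (Fin 2 → ℂ) →ₗ[ℂ] (Fin 2 → ℂ) →ₗ[ℂ] (Fin 2 → ℂ) →ₗ[ℂ] (Fin 2 → ℂ))
    (hskew : ∀ x y z, p x y z = - p y x z) :
    (∀ x1 x2 x3 x4 x5, p x1 x2 (p x3 x4 x5) =
      p (p x1 x2 x3 + p x2 x3 x1 + p x3 x1 x2) x4 x5
        + p x3 (p x1 x2 x4 + p x2 x4 x1 + p x4 x1 x2) x5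
        + p x3 x4 (p x1 x2 x5)) ∧
    (∀ x1 x2 x3 x4 x5, p (p x1 x2 x3 + p x2 x3 x1 + p x3 x1 x2) x4 x5 =
      p x1 x2 (p x3 x4 x5) + p x2 x3 (p x1 x4 x5) + p x3 x1 (p x2 x4 x5)) := by
  set e0 : Fin 2 → ℂ := ![1, 0] with he0
  set e1 : Fin 2 → ℂ := ![0, 1] with he1
  have hdec : ∀ x : Fin 2 → ℂ, x = x 0 • e0 + x 1 • e1 := by
    intro x
    funext i
    fin_cases i <;> simp [he0, he1]
  have hzero : ∀ x z, p x x z = 0 := by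
    intro x z
    have h := hskew x x z
    have h1 : p x x z + p x x z = 0 := by nth_rewrite 1 [h]; exact neg_add_cancel _
    have h2 : (2 : ℂ) • p x x z = 0 := by rw [two_smul]; exact h1
    simpa using (smul_eq_zero.mp h2).resolve_left (by norm_num)
  have key : ∀ x y z, p x y z = (x 0 * y 1 - x 1 * y 0) • p e0 e1 z := by
    intro x y z
    conv_lhs => rw [hdec x, hdec y]
    simp only [map_add, map_smul, LinearMap.add_apply, LinearMap.smul_apply]
    rw [hzero e0, hzero e1, hskew e1 e0]
    simp only [smul_zero, smul_neg]
    rw [sub_smul]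
    module
  obtain ⟨w0, hw0⟩ : ∃ w, p e0 e1 e0 = w := ⟨_, rfl⟩
  obtain ⟨w1, hw1⟩ : ∃ w, p e0 e1 e1 = w := ⟨_, rfl⟩
  have keyw : ∀ x y z, p x y z = (x 0 * y 1 - x 1 * y 0) • (z 0 • w0 + z 1 • w1) := by
    intro x y z
    rw [key x y z]
    congr 1
    conv_lhs => rw [hdec z]
    simp only [map_add, map_smul, hw0, hw1]
  constructor <;> intro x1 x2 x3 x4 x5 <;>
    simp only [keyw, Pi.add_apply, Pi.smul_apply, smul_eq_mul] <;>
    funext i <;>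
    simp only [Pi.add_apply, Pi.smul_apply, smul_eq_mul] <;>
    ring
end

section
/- Let A6 = A ⊕ A* be the 6-dimensional 3-Lie algebra with basis e1,e2,e3,e1*,e2*,e3* and nonzero brackets [e1,e2,e3] = e1, [e1,e2,e1*] = −e3*, [e1,e3,e1*] = e2*, [e2,e3,e1*] = −e1*. Then r := e2* ⊗ (a21 e1 + a22 e2 + a23 e3) − (a21 e1 + a22 e2 + a23 e3) ⊗ e2* + e3* ⊗ (a31 e1 + a32 e2 + a33 e3) − (a31 e1 + a32 e2 + a33 e3) ⊗ e3* is a skew-symmetric solution of the 3-Lie classical Yang-Baxter equation [[r,r,r]] = 0 in A6, for all complex parameters a21,...,a33. -/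
open Finset

/-- The standard basis of `ℂ⁶`: `u 0,u 1,u 2 = e₁,e₂,e₃` and `u 3,u 4,u 5 = e₁*,e₂*,e₃*`. -/
def u (i : Fin 6) : Fin 6 → ℂ := fun j => if j = i then 1 else 0

/-- The alternating 3×3 minor of the coordinates `i,j,k` of `x,y,z`. -/
def m3 (x y z : Fin 6 → ℂ) (i j k : Fin 6) : ℂ :=
  x i * (y j * z k - y k * z j) - x j * (y i * z k - y k * z i)
    + x k * (y i * z j - y j * z i)

/-- The trilinear skew-symmetric bracket of the 6-dimensional 3-Lie algebra
`A ⋉_{ad*} A*` with nonzero basis brackets `[e₁,e₂,e₃] = e₁`, `[e₁,e₂,e₁*] = −e₃*`,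
`[e₁,e₃,e₁*] = e₂*`, `[e₂,e₃,e₁*] = −e₁*`. -/
def br6 (x y z : Fin 6 → ℂ) : Fin 6 → ℂ :=
  m3 x y z 0 1 2 • u 0 - m3 x y z 0 1 3 • u 5 + m3 x y z 0 2 3 • u 4
    - m3 x y z 1 2 3 • u 3

/-- The elementary tensor `x ⊗ y`, in coordinates. -/
def tens (x y : Fin 6 → ℂ) : Fin 6 → Fin 6 → ℂ := fun i j => x i * y j

lemma key_trilinear (f g h : Fin 6 → ℂ) (α : Fin 6) :
    ∑ i, ∑ j, ∑ k, f i * g j * h k * br6 (u i) (u j) (u k) α = br6 f g h α := by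
  fin_cases α <;> simp [Fin.sum_univ_six, br6, m3, u] <;> ring

lemma vanish (a21 a22 a23 a31 a32 a33 p2 p3 q2 q3 s2 s3 : ℂ) {x y z : Fin 6 → ℂ}
    (hx0 : x 0 = p2 * a21 + p3 * a31) (hx1 : x 1 = p2 * a22 + p3 * a32)
    (hx2 : x 2 = p2 * a23 + p3 * a33) (hx3 : x 3 = 0)
    (hy0 : y 0 = q2 * a21 + q3 * a31) (hy1 : y 1 = q2 * a22 + q3 * a32)
    (hy2 : y 2 = q2 * a23 + q3 * a33) (hy3 : y 3 = 0)
    (hz0 : z 0 = s2 * a21 + s3 * a31) (hz1 : z 1 = s2 * a22 + s3 * a32)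
    (hz2 : z 2 = s2 * a23 + s3 * a33) (hz3 : z 3 = 0) (α : Fin 6) :
    br6 x y z α = 0 := by
  have h1 : m3 x y z 0 1 2 = 0 := by
    rw [m3, hx0, hx1, hx2, hy0, hy1, hy2, hz0, hz1, hz2]; ring
  have h2 : m3 x y z 0 1 3 = 0 := by rw [m3, hx3, hy3, hz3]; try ring
  have h3 : m3 x y z 0 2 3 = 0 := by rw [m3, hx3, hy3, hz3]; try ring
  have h4 : m3 x y z 1 2 3 = 0 := by rw [m3, hx3, hy3, hz3]; try ring
  simp [br6, h1, h2, h3, h4]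

/-- `r = e₂* ⊗ w₂ − w₂ ⊗ e₂* + e₃* ⊗ w₃ − w₃ ⊗ e₃*` is a skew-symmetric solution of the
3-Lie classical Yang–Baxter equation `[[r,r,r]] = 0` in the 6-dimensional 3-Lie algebra
`A ⋉_{ad*} A*` (written in coordinates with respect to the basis `u`). -/
theorem r1_solves_three_Lie_CYBE (a21 a22 a23 a31 a32 a33 : ℂ) :
    let w2 : Fin 6 → ℂ := a21 • u 0 + a22 • u 1 + a23 • u 2
    let w3 : Fin 6 → ℂ := a31 • u 0 + a32 • u 1 + a33 • u 2
    let r : Fin 6 → Fin 6 → ℂ :=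
      tens (u 4) w2 - tens w2 (u 4) + tens (u 5) w3 - tens w3 (u 5)
    (∀ i j, r i j = - r j i) ∧
    (∀ α β γ δ : Fin 6,
      (∑ i, ∑ j, ∑ k, r i β * r j γ * r k δ * br6 (u i) (u j) (u k) α)
        + (∑ i, ∑ j, ∑ k, r α i * r j γ * r k δ * br6 (u i) (u j) (u k) β)
        + (∑ i, ∑ j, ∑ k, r α i * r β j * r k δ * br6 (u i) (u j) (u k) γ)
        + (∑ i, ∑ j, ∑ k, r α i * r β j * r γ k * br6 (u i) (u j) (u k) δ) = 0) := by
  intro w2 w3 r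
  have h0 : ∀ j, r 0 j = -(u 4 j) * a21 + -(u 5 j) * a31 := by
    intro j; simp [r, w2, w3, tens, u]; try ring
  have h1 : ∀ j, r 1 j = -(u 4 j) * a22 + -(u 5 j) * a32 := by
    intro j; simp [r, w2, w3, tens, u]; try ring
  have h2 : ∀ j, r 2 j = -(u 4 j) * a23 + -(u 5 j) * a33 := by
    intro j; simp [r, w2, w3, tens, u]; try ring
  have h3 : ∀ j, r 3 j = 0 := by
    intro j; simp [r, w2, w3, tens, u]
  have g0 : ∀ i, r i 0 = u 4 i * a21 + u 5 i * a31 := by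
    intro i; simp [r, w2, w3, tens, u]; try ring
  have g1 : ∀ i, r i 1 = u 4 i * a22 + u 5 i * a32 := by
    intro i; simp [r, w2, w3, tens, u]; try ring
  have g2 : ∀ i, r i 2 = u 4 i * a23 + u 5 i * a33 := by
    intro i; simp [r, w2, w3, tens, u]; try ring
  have g3 : ∀ i, r i 3 = 0 := by
    intro i; simp [r, w2, w3, tens, u]
  constructor
  · intro i j
    simp only [r, tens, Pi.add_apply, Pi.sub_apply]
    ring
  · intro α β γ δ
    rw [key_trilinear, key_trilinear, key_trilinear, key_trilinear]
    have e1 : br6 (fun i => r i β) (fun j => r j γ) (fun k => r k δ) α = 0 :=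
      vanish a21 a22 a23 a31 a32 a33 (-(u 4 β)) (-(u 5 β)) (-(u 4 γ)) (-(u 5 γ))
        (-(u 4 δ)) (-(u 5 δ)) (h0 β) (h1 β) (h2 β) (h3 β) (h0 γ) (h1 γ) (h2 γ) (h3 γ)
        (h0 δ) (h1 δ) (h2 δ) (h3 δ) α
    have e2 : br6 (fun i => r α i) (fun j => r j γ) (fun k => r k δ) β = 0 :=
      vanish a21 a22 a23 a31 a32 a33 (u 4 α) (u 5 α) (-(u 4 γ)) (-(u 5 γ))
        (-(u 4 δ)) (-(u 5 δ)) (g0 α) (g1 α) (g2 α) (g3 α) (h0 γ) (h1 γ) (h2 γ) (h3 γ)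
        (h0 δ) (h1 δ) (h2 δ) (h3 δ) β
    have e3 : br6 (fun i => r α i) (fun j => r β j) (fun k => r k δ) γ = 0 :=
      vanish a21 a22 a23 a31 a32 a33 (u 4 α) (u 5 α) (u 4 β) (u 5 β)
        (-(u 4 δ)) (-(u 5 δ)) (g0 α) (g1 α) (g2 α) (g3 α) (g0 β) (g1 β) (g2 β) (g3 β)
        (h0 δ) (h1 δ) (h2 δ) (h3 δ) γ
    have e4 : br6 (fun i => r α i) (fun j => r β j) (fun k => r γ k) δ = 0 :=
      vanish a21 a22 a23 a31 a32 a33 (u 4 α) (u 5 α) (u 4 β) (u 5 β)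
        (u 4 γ) (u 5 γ) (g0 α) (g1 α) (g2 α) (g3 α) (g0 β) (g1 β) (g2 β) (g3 β)
        (g0 γ) (g1 γ) (g2 γ) (g3 γ) δ
    rw [e1, e2, e3, e4]
    ring
end
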